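/- arXiv:1812.08993 — 2 statements merged into one kernel-verified Lean document; each statement's English description precedes it below -/
import Mathlib

section
/- Let q be a prime power, r ≥ 2 a divisor of q-1, m ≥ 1, and 0 ≤ t ≤ m-1. Let θ generate F_{q^m}^*, let G ≤ F_q^* have order r, V an F_q-subspace of dimension t, and α_2,...,α_ℓ as in the coset partition lemma with ℓ = 1 + (q^{m-t}-1)/r. Define sequences s_i = (φ(1+α_i), φ(θ+α_i), ..., φ(θ^{q^m-2}+α_i)) for 2 ≤ i ≤ ℓ, where φ(x) = ∏_{g∈G}∏_{β∈V}(x+g+β). Then the set S = {s_2,...,s_ℓ} is a frequency hopping sequence set of (ℓ-1) = (q^{m-t}-1)/r sequences of length q^m - 1 over an alphabet of size ℓ = (q^{m-t}-1)/r + 1, whose maximum Hamming correlation H_m(S) is at most r·q^t. -/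
set_option linter.unusedSectionVars false
set_option linter.unnecessarySimpa false
set_option maxHeartbeats 1000000

open Polynomial Finset
open scoped Classical

/-- The (additive) coset `a + V` of a set `V`. -/
def coset {K : Type*} [Add K] (V : Set K) (a : K) : Set K := {x | ∃ v ∈ V, x = a + v}

/-- The polynomial `φ(x) = ∏_{g ∈ G} ∏_{β ∈ V} (x + g + β)`. -/
noncomputable def phiPoly {Fq K : Type*} [Field Fq] [Field K] [Fintype K] [Algebra Fq K]
    (G : Subgroup Kˣ) (V : Submodule Fq K) : Polynomial K :=
  ∏ g : G, ∏ β : V, (X + C ((g : Kˣ) : K) + C (β : K))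

section Aux

variable {Fq K : Type*} [Field Fq] [Fintype Fq] [Field K] [Fintype K] [Algebra Fq K]

lemma coset_eq_iff (V : Submodule Fq K) (a b : K) :
    coset (V : Set K) a = coset (V : Set K) b ↔ a - b ∈ V := by
  constructor
  · intro h
    have ha : a ∈ coset (V : Set K) a := ⟨0, V.zero_mem, by ring⟩
    rw [h] at ha
    obtain ⟨v, hv, hav⟩ := ha
    have hab : a - b = v := by rw [hav]; ring
    rwa [hab]
  · intro h
    ext x
    constructor
    · rintro ⟨v, hv, rfl⟩
      exact ⟨(a - b) + v, V.add_mem h hv, by ring⟩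
    · rintro ⟨v, hv, rfl⟩
      exact ⟨v - (a - b), V.sub_mem hv h, by ring⟩

lemma eval_phiPoly (G : Subgroup Kˣ) (V : Submodule Fq K) (x : K) :
    (phiPoly G V).eval x = ∏ g : G, ∏ β : V, (x + ((g : Kˣ) : K) + (β : K)) := by
  simp [phiPoly, eval_prod]

lemma phiPoly_natDegree (G : Subgroup Kˣ) (V : Submodule Fq K) :
    (phiPoly G V).natDegree = Fintype.card G * Fintype.card V := by
  have h1 : ∀ (g : G) (β : V), (X + C ((g : Kˣ) : K) + C (β : K)).Monic := by
    intro g β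
    have e : (X + C ((g : Kˣ) : K) + C (β : K)) = X + C (((g : Kˣ) : K) + (β : K)) := by
      rw [C_add, add_assoc]
    rw [e]; exact monic_X_add_C _
  have h2 : ∀ g : G, (∏ β : V, (X + C ((g : Kˣ) : K) + C (β : K))).natDegree
      = Fintype.card V := by
    intro g
    rw [natDegree_prod _ _ (fun β _ => (h1 g β).ne_zero)]
    rw [Finset.sum_congr rfl (fun β _ => by
      rw [show (X + C ((g : Kˣ) : K) + C (β : K)) = X + C (((g : Kˣ) : K) + (β : K)) from by
        rw [C_add, add_assoc], natDegree_X_add_C])]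
    simp
  rw [phiPoly, natDegree_prod _ _ (fun g _ =>
      (monic_prod_of_monic _ _ (fun β _ => h1 g β)).ne_zero)]
  rw [Finset.sum_congr rfl (fun g _ => h2 g)]
  simp [mul_comm]

lemma phi_eval_add_mem (G : Subgroup Kˣ) (V : Submodule Fq K) (x v : K) (hv : v ∈ V) :
    (phiPoly G V).eval (x + v) = (phiPoly G V).eval x := by
  rw [eval_phiPoly, eval_phiPoly]
  refine Finset.prod_congr rfl fun g _ => ?_
  refine Fintype.prod_equiv (Equiv.addLeft (⟨v, hv⟩ : V)) _ _ fun β => ?_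
  simp only [Equiv.coe_addLeft, Submodule.coe_add]
  push_cast
  ring

lemma phi_eval_mul_g (G : Subgroup Kˣ) (V : Submodule Fq K)
    (hGsub : ∀ g : G, ∃ a : Fq, algebraMap Fq K a = ((g : Kˣ) : K)) (x : K) (g : G) :
    (phiPoly G V).eval (x * ((g : Kˣ) : K)) = (phiPoly G V).eval x := by
  obtain ⟨a, ha⟩ := hGsub g
  have ha0 : a ≠ 0 := by
    intro h
    rw [h, map_zero] at ha
    exact (Units.ne_zero (g : Kˣ)) ha.symm
  set u : Fqˣ := Units.mk0 a ha0 with hu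
  have hsmul : ∀ β : V, ((u • β : V) : K) = ((g : Kˣ) : K) * (β : K) := by
    intro β
    show ((a • β : V) : K) = _
    rw [SetLike.val_smul, Algebra.smul_def, ha]
  set gc : K := ((g : Kˣ) : K) with hgc
  have step : ∀ g'' : G, (∏ β : V, (x * gc + (gc * ((g'' : Kˣ) : K)) + (β : K)))
      = gc ^ Fintype.card V * ∏ β : V, (x + ((g'' : Kˣ) : K) + (β : K)) := by
    intro g''
    have e1 : (∏ β : V, (x * gc + (gc * ((g'' : Kˣ) : K)) + (β : K)))
        = ∏ β : V, (x * gc + (gc * ((g'' : Kˣ) : K)) + ((u • β : V) : K)) := by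
      refine (Fintype.prod_equiv (MulAction.toPerm u) _ _ fun β => rfl).symm
    rw [e1]
    rw [show (∏ β : V, (x * gc + (gc * ((g'' : Kˣ) : K)) + ((u • β : V) : K)))
        = ∏ β : V, (gc * (x + ((g'' : Kˣ) : K) + (β : K))) from
      Finset.prod_congr rfl fun β _ => by rw [hsmul]; ring]
    rw [Finset.prod_mul_distrib, Finset.prod_const, Finset.card_univ]
  have hgpow : gc ^ Fintype.card G = 1 := by
    have h1 : g ^ (Fintype.card G) = 1 := pow_card_eq_one
    rw [hgc, ← Units.val_pow_eq_pow_val, ← SubmonoidClass.coe_pow, h1]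
    simp
  calc (phiPoly G V).eval (x * gc)
      = ∏ g' : G, ∏ β : V, (x * gc + ((g' : Kˣ) : K) + (β : K)) := eval_phiPoly G V _
    _ = ∏ g'' : G, ∏ β : V, (x * gc + (gc * ((g'' : Kˣ) : K)) + (β : K)) := by
        refine (Fintype.prod_equiv (Equiv.mulLeft g) _ _ fun g'' => ?_).symm
        simp only [Equiv.coe_mulLeft]
        refine Finset.prod_congr rfl fun β _ => ?_
        push_cast
        ring
    _ = ∏ g'' : G, (gc ^ Fintype.card V * ∏ β : V, (x + ((g'' : Kˣ) : K) + (β : K))) :=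
        Finset.prod_congr rfl fun g'' _ => step g''
    _ = (gc ^ Fintype.card V) ^ Fintype.card G
          * ∏ g'' : G, ∏ β : V, (x + ((g'' : Kˣ) : K) + (β : K)) := by
        rw [Finset.prod_mul_distrib, Finset.prod_const, Finset.card_univ]
    _ = (phiPoly G V).eval x := by
        rw [← pow_mul, mul_comm (Fintype.card V), pow_mul, hgpow, one_pow, one_mul,
          eval_phiPoly]

lemma card_le_natDegree_of_roots {f : K[X]} (hf : f ≠ 0) (S : Finset K)
    (h : ∀ x ∈ S, f.eval x = 0) : S.card ≤ f.natDegree := by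
  have h1 : S ⊆ f.roots.toFinset := by
    intro x hx
    exact Multiset.mem_toFinset.2 ((mem_roots hf).2 (h x hx))
  calc S.card ≤ f.roots.toFinset.card := Finset.card_le_card h1
    _ ≤ Multiset.card f.roots := f.roots.toFinset_card_le
    _ ≤ f.natDegree := f.card_roots'

lemma values_ne {L : ℕ} (G : Subgroup Kˣ) (V : Submodule Fq K)
    (hGsub : ∀ g : G, ∃ a : Fq, algebraMap Fq K a = ((g : Kˣ) : K))
    (α : Fin (L + 1) → K) (hα0 : α 0 = 0)
    (hne : ∀ (i : Fin (L + 1)) (g : G), i ≠ 0 →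
      coset (V : Set K) (α i * ((g : Kˣ) : K)) ≠ coset (V : Set K) 0)
    (hinj : ∀ (i j : Fin (L + 1)) (gi gj : G), i ≠ 0 → j ≠ 0 →
      coset (V : Set K) (α i * ((gi : Kˣ) : K)) = coset (V : Set K) (α j * ((gj : Kˣ) : K)) →
      i = j ∧ gi = gj)
    {i j : Fin (L + 1)} (hij : i ≠ j) :
    (phiPoly G V).eval (α i) ≠ (phiPoly G V).eval (α j) := by
  set φ := phiPoly G V with hφ
  have main : ∀ i j : Fin (L + 1), i ≠ j → j ≠ 0 →
      φ.eval (α i) ≠ φ.eval (α j) := by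
    intro i j hij hj h
    set D := Fintype.card G * Fintype.card V with hD
    have hD1 : 1 ≤ D := Nat.one_le_iff_ne_zero.2 (Nat.mul_ne_zero
      Fintype.card_ne_zero Fintype.card_ne_zero)
    set w := φ.eval (α j) with hw
    set f : K[X] := φ - C w with hf
    have hfdeg : f.natDegree = D := by
      rw [hf, natDegree_sub_C, hφ, phiPoly_natDegree]
    have hf0 : f ≠ 0 := by
      intro h0
      rw [h0, natDegree_zero] at hfdeg
      omega
    -- class finsets
    set cl : Fin (L + 1) → Finset K :=
      fun p => Finset.univ.image (fun gv : G × V => α p * ((gv.1 : Kˣ) : K) + (gv.2 : K)) with hcl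
    have hclcard : ∀ p : Fin (L + 1), p ≠ 0 → (cl p).card = D := by
      intro p hp
      rw [hcl]
      rw [Finset.card_image_of_injective _ ?_, Finset.card_univ, Fintype.card_prod, hD]
      rintro ⟨g1, v1⟩ ⟨g2, v2⟩ hgv
      simp only at hgv
      have hco : coset (V : Set K) (α p * ((g1 : Kˣ) : K))
          = coset (V : Set K) (α p * ((g2 : Kˣ) : K)) := by
        rw [coset_eq_iff]
        have : α p * ((g1 : Kˣ) : K) - α p * ((g2 : Kˣ) : K) = (v2 : K) - (v1 : K) := by
          linear_combination hgv
        rw [this]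
        exact V.sub_mem v2.2 v1.2
      have hg := (hinj p p g1 g2 hp hp hco).2
      subst hg
      have hv : (v1 : K) = (v2 : K) := by linear_combination hgv
      exact congrArg (Prod.mk g1) (Subtype.ext hv)
    have hclval : ∀ (p : Fin (L + 1)) (x : K), x ∈ cl p → φ.eval x = φ.eval (α p) := by
      intro p x hx
      rw [hcl] at hx
      simp only [Finset.mem_image, Finset.mem_univ, true_and] at hx
      obtain ⟨⟨g, v⟩, rfl⟩ := hx
      rw [phi_eval_add_mem G V _ _ v.2, phi_eval_mul_g G V hGsub]
    have hclcoset : ∀ (p : Fin (L + 1)) (x : K), x ∈ cl p →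
        ∃ g : G, coset (V : Set K) (α p * ((g : Kˣ) : K)) = coset (V : Set K) x := by
      intro p x hx
      rw [hcl] at hx
      simp only [Finset.mem_image, Finset.mem_univ, true_and] at hx
      obtain ⟨⟨g, v⟩, rfl⟩ := hx
      refine ⟨g, ?_⟩
      rw [coset_eq_iff]
      have : α p * ((g : Kˣ) : K) - (α p * ((g : Kˣ) : K) + (v : K)) = -(v : K) := by ring
      rw [this]
      exact V.neg_mem v.2
    -- the set S1 for index i
    by_cases hi : i = 0
    · -- S1 = {0}
      subst hi
      have h0root : f.eval 0 = 0 := by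
        rw [hf, eval_sub, eval_C, sub_eq_zero, ← hα0]
        exact h
      have hroots : ∀ x ∈ insert (0 : K) (cl j), f.eval x = 0 := by
        intro x hx
        rcases Finset.mem_insert.1 hx with rfl | hx
        · exact h0root
        · rw [hf, eval_sub, eval_C, hclval j x hx, sub_self]
      have h0notin : (0 : K) ∉ cl j := by
        intro h0
        obtain ⟨g, hg⟩ := hclcoset j 0 h0
        apply hne j g hj
        rw [hg, coset_eq_iff]
        simpa using V.zero_mem
      have hcard := card_le_natDegree_of_roots hf0 _ hroots
      rw [Finset.card_insert_of_notMem h0notin, hclcard j hj, hfdeg] at hcard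
      omega
    · -- both nonzero
      have hdisj : Disjoint (cl i) (cl j) := by
        rw [Finset.disjoint_left]
        intro x hxi hxj
        obtain ⟨gi, hgi⟩ := hclcoset i x hxi
        obtain ⟨gj, hgj⟩ := hclcoset j x hxj
        exact hij (hinj i j gi gj hi hj (hgi.trans hgj.symm)).1
      have hroots : ∀ x ∈ (cl i) ∪ (cl j), f.eval x = 0 := by
        intro x hx
        rcases Finset.mem_union.1 hx with hx | hx
        · rw [hf, eval_sub, eval_C, hclval i x hx, h, sub_self]
        · rw [hf, eval_sub, eval_C, hclval j x hx, sub_self]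
      have hcard := card_le_natDegree_of_roots hf0 _ hroots
      rw [Finset.card_union_of_disjoint hdisj, hclcard i hi, hclcard j hj, hfdeg] at hcard
      omega
  by_cases hj : j = 0
  · subst hj
    have hi : i ≠ 0 := hij
    exact fun h => main 0 i hij.symm hi h.symm
  · exact main i j hij hj

lemma mem_class_of_eval_eq {L : ℕ} (G : Subgroup Kˣ) (V : Submodule Fq K)
    (hGsub : ∀ g : G, ∃ a : Fq, algebraMap Fq K a = ((g : Kˣ) : K))
    (α : Fin (L + 1) → K) (hα0 : α 0 = 0)
    (hne : ∀ (i : Fin (L + 1)) (g : G), i ≠ 0 →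
      coset (V : Set K) (α i * ((g : Kˣ) : K)) ≠ coset (V : Set K) 0)
    (hinj : ∀ (i j : Fin (L + 1)) (gi gj : G), i ≠ 0 → j ≠ 0 →
      coset (V : Set K) (α i * ((gi : Kˣ) : K)) = coset (V : Set K) (α j * ((gj : Kˣ) : K)) →
      i = j ∧ gi = gj)
    (hcover : (⋃ i, ⋃ g : G, coset (V : Set K) (α i * ((g : Kˣ) : K))) = Set.univ)
    (y : K) (p : Fin (L + 1))
    (h : (phiPoly G V).eval y = (phiPoly G V).eval (α p)) :
    ∃ g : G, y - α p * ((g : Kˣ) : K) ∈ V := by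
  have hy : y ∈ (⋃ i, ⋃ g : G, coset (V : Set K) (α i * ((g : Kˣ) : K))) := by
    rw [hcover]; trivial
  simp only [Set.mem_iUnion] at hy
  obtain ⟨p', g, v, hv, hyv⟩ := hy
  have hval : (phiPoly G V).eval y = (phiPoly G V).eval (α p') := by
    rw [hyv, phi_eval_add_mem G V _ _ hv, phi_eval_mul_g G V hGsub]
  have hpp : p' = p := by
    by_contra hpp
    exact values_ne G V hGsub α hα0 hne hinj hpp (hval.symm.trans h)
  subst hpp
  exact ⟨g, by rw [hyv]; simpa using hv⟩

lemma no_identity {L : ℕ} (G : Subgroup Kˣ) (V : Submodule Fq K)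
    (hGsub : ∀ g : G, ∃ a : Fq, algebraMap Fq K a = ((g : Kˣ) : K))
    (α : Fin (L + 1) → K) (hα0 : α 0 = 0)
    (hne : ∀ (i : Fin (L + 1)) (g : G), i ≠ 0 →
      coset (V : Set K) (α i * ((g : Kˣ) : K)) ≠ coset (V : Set K) 0)
    (hinj : ∀ (i j : Fin (L + 1)) (gi gj : G), i ≠ 0 → j ≠ 0 →
      coset (V : Set K) (α i * ((gi : Kˣ) : K)) = coset (V : Set K) (α j * ((gj : Kˣ) : K)) →
      i = j ∧ gi = gj)
    (hcover : (⋃ i, ⋃ g : G, coset (V : Set K) (α i * ((g : Kˣ) : K))) = Set.univ)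
    (i j : Fin (L + 1)) (hi : i ≠ 0) (hj : j ≠ 0)
    (c : K) (hcase : c ≠ 1 ∨ i ≠ j)
    (H : ∀ x : K, (phiPoly G V).eval (x + α i) = (phiPoly G V).eval (c * x + α j)) :
    False := by
  set φ := phiPoly G V with hφ
  have hijeq : i = j := by
    by_contra hij
    exact values_ne G V hGsub α hα0 hne hinj hij (by simpa using H 0)
  subst hijeq
  have hc : c ≠ 1 := by
    rcases hcase with hc | hc
    · exact hc
    · exact absurd rfl hc
  have memV : ∀ y : K, φ.eval y = φ.eval 0 → y ∈ V := by
    intro y hy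
    obtain ⟨g, hg⟩ := mem_class_of_eval_eq G V hGsub α hα0 hne hinj hcover y 0
      (by rw [hα0]; exact hy)
    rw [hα0, zero_mul, sub_zero] at hg
    exact hg
  have hkey : ∀ v ∈ V, c * (v - α i) + α i ∈ V := by
    intro v hv
    apply memV
    rw [← H (v - α i), sub_add_cancel]
    have := phi_eval_add_mem G V 0 v hv
    rwa [zero_add] at this
  have hw : α i - c * α i ∈ V := by
    have h0 := hkey 0 V.zero_mem
    have e : c * (0 - α i) + α i = α i - c * α i := by ring
    rwa [e] at h0
  have hcv : ∀ v ∈ V, c * v ∈ V := by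
    intro v hv
    have h1 := hkey v hv
    have e : c * v = (c * (v - α i) + α i) - (α i - c * α i) := by ring
    rw [e]
    exact V.sub_mem h1 hw
  have hc1 : c - 1 ≠ 0 := sub_ne_zero.2 hc
  set F : V → V := fun v => ⟨(c - 1) * (v : K), by
    have e : (c - 1) * (v : K) = c * (v : K) - (v : K) := by ring
    rw [e]
    exact V.sub_mem (hcv _ v.2) v.2⟩ with hF
  have hFinj : Function.Injective F := by
    intro a b hab
    have h1 : (c - 1) * (a : K) = (c - 1) * (b : K) := congrArg Subtype.val hab
    exact Subtype.ext (mul_left_cancel₀ hc1 h1)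
  have hFsurj : Function.Surjective F := Finite.injective_iff_surjective.mp hFinj
  have hwV : (c - 1) * α i ∈ V := by
    have e : (c - 1) * α i = -(α i - c * α i) := by ring
    rw [e]
    exact V.neg_mem hw
  obtain ⟨v, hv⟩ := hFsurj ⟨(c - 1) * α i, hwV⟩
  have h2 : (c - 1) * (v : K) = (c - 1) * α i := congrArg Subtype.val hv
  have hαiV : α i ∈ V := by
    have := mul_left_cancel₀ hc1 h2
    rw [← this]
    exact v.2
  apply hne i 1 hi
  rw [coset_eq_iff]
  simpa using hαiV

end Aux

/-- the construction yields an FHS set of `(q^{m-t}-1)/r` pairwise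
distinct sequences of length `q^m - 1` over an alphabet of size `(q^{m-t}-1)/r + 1`,
with maximum Hamming correlation at most `r q^t`. -/
theorem stmt7 (q r m t : ℕ) (hq : IsPrimePow q) (hm : 1 ≤ m) (ht : t ≤ m - 1)
    (hr : r ∣ q - 1)
    (Fq K : Type*) [Field Fq] [Fintype Fq] [Field K] [Fintype K] [Algebra Fq K]
    (hcq : Fintype.card Fq = q) (hcK : Fintype.card K = q ^ m)
    (V : Submodule Fq K) (hV : Module.finrank Fq V = t)
    (G : Subgroup Kˣ) (hG : Nat.card G = r)
    (hGsub : ∀ g : G, ∃ a : Fq, algebraMap Fq K a = ((g : Kˣ) : K))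
    (hr2 : 2 ≤ r)
    (θ : Kˣ) (hθ : ∀ x : Kˣ, x ∈ Subgroup.zpowers θ)
    (α : Fin ((q ^ (m - t) - 1) / r + 1) → K) (hα0 : α 0 = 0)
    (hne : ∀ (i : Fin ((q ^ (m - t) - 1) / r + 1)) (g : G), i ≠ 0 →
      coset (V : Set K) (α i * ((g : Kˣ) : K)) ≠ coset (V : Set K) 0)
    (hinj : ∀ (i j : Fin ((q ^ (m - t) - 1) / r + 1)) (gi gj : G), i ≠ 0 → j ≠ 0 →
      coset (V : Set K) (α i * ((gi : Kˣ) : K)) = coset (V : Set K) (α j * ((gj : Kˣ) : K)) →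
      i = j ∧ gi = gj)
    (hcover : (⋃ i, ⋃ g : G, coset (V : Set K) (α i * ((g : Kˣ) : K))) = Set.univ) :
    (∀ i j : Fin ((q ^ (m - t) - 1) / r + 1), i ≠ 0 → j ≠ 0 → i ≠ j →
      (fun k : Fin (q ^ m - 1) => (phiPoly G V).eval (((θ : Kˣ) : K) ^ (k : ℕ) + α i)) ≠
      (fun k : Fin (q ^ m - 1) => (phiPoly G V).eval (((θ : Kˣ) : K) ^ (k : ℕ) + α j))) ∧
    (Set.range (fun p : {i : Fin ((q ^ (m - t) - 1) / r + 1) // i ≠ 0} × Fin (q ^ m - 1) =>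
      (phiPoly G V).eval (((θ : Kˣ) : K) ^ ((p.2 : ℕ)) + α p.1.1))).ncard
        = (q ^ (m - t) - 1) / r + 1 ∧
    (∀ i j : Fin ((q ^ (m - t) - 1) / r + 1), i ≠ 0 → j ≠ 0 →
      ∀ τ : ℕ, τ < q ^ m - 1 → (i ≠ j ∨ 1 ≤ τ) →
      ((Finset.range (q ^ m - 1)).filter (fun k =>
        (phiPoly G V).eval (((θ : Kˣ) : K) ^ k + α i) =
        (phiPoly G V).eval (((θ : Kˣ) : K) ^ ((k + τ) % (q ^ m - 1)) + α j))).card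
          ≤ r * q ^ t) := by
  have hq2 : 2 ≤ q := hq.two_le
  have hqm2 : 2 ≤ q ^ m := le_trans hq2 (Nat.le_self_pow (by omega) q)
  have hN1 : 1 ≤ q ^ m - 1 := by omega
  have hcardKu : Fintype.card Kˣ = q ^ m - 1 := by
    rw [Fintype.card_units, hcK]
  have hord : orderOf θ = q ^ m - 1 := by
    rw [orderOf_eq_card_of_forall_mem_zpowers hθ, Nat.card_eq_fintype_card, hcardKu]
  have hθN : ((θ : Kˣ) : K) ^ (q ^ m - 1) = 1 := by
    have h1 : θ ^ (q ^ m - 1) = 1 := by rw [← hord]; exact pow_orderOf_eq_one θ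
    rw [← Units.val_pow_eq_pow_val, h1, Units.val_one]
  have hVcard : Fintype.card V = q ^ t := by
    rw [Module.card_eq_pow_finrank (K := Fq) (V := V), hcq, hV]
  have hGcard : Fintype.card G = r := by
    rw [← Nat.card_eq_fintype_card, hG]
  have hαne : ∀ i : Fin ((q ^ (m - t) - 1) / r + 1), i ≠ 0 → α i ≠ 0 := by
    intro i hi h0
    apply hne i 1 hi
    rw [coset_eq_iff, h0]
    simpa using V.zero_mem
  have exists_pow : ∀ x : K, x ≠ 0 → ∃ k : ℕ, k < q ^ m - 1 ∧ ((θ : Kˣ) : K) ^ k = x := by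
    intro x hx
    obtain ⟨n, hn⟩ := mem_powers_iff_mem_zpowers.mpr (hθ (Units.mk0 x hx))
    refine ⟨n % (q ^ m - 1), Nat.mod_lt _ (by omega), ?_⟩
    have h1 : θ ^ (n % (q ^ m - 1)) = Units.mk0 x hx := by
      rw [← hn, ← hord, pow_mod_orderOf]
    rw [← Units.val_pow_eq_pow_val, h1, Units.val_mk0]
  refine ⟨?_, ?_, ?_⟩
  · -- part 1 : pairwise distinct sequences
    intro i j hi hj hij h
    obtain ⟨k, hk, hkθ⟩ := exists_pow (-(α i)) (neg_ne_zero.2 (hαne i hi))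
    have hfun := congrFun h (⟨k, hk⟩ : Fin (q ^ m - 1))
    simp only at hfun
    rw [hkθ] at hfun
    have h1 : (phiPoly G V).eval (-(α i) + α i) = (phiPoly G V).eval (α 0) := by
      rw [neg_add_cancel, hα0]
    have h2 : (phiPoly G V).eval (-(α i) + α j) = (phiPoly G V).eval (α 0) := by
      rw [← hfun, h1]
    obtain ⟨g, hg⟩ := mem_class_of_eval_eq G V hGsub α hα0 hne hinj hcover _ 0 h2
    rw [hα0, zero_mul, sub_zero] at hg
    have hco : coset (V : Set K) (α j * (((1 : G) : Kˣ) : K))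
        = coset (V : Set K) (α i * (((1 : G) : Kˣ) : K)) := by
      rw [coset_eq_iff]
      simpa [neg_add_eq_sub] using hg
    exact hij ((hinj j i 1 1 hj hi hco).1).symm
  · -- part 2 : alphabet size
    have hrange : (Set.range fun p : {i : Fin ((q ^ (m - t) - 1) / r + 1) // i ≠ 0} × Fin (q ^ m - 1) =>
        (phiPoly G V).eval (((θ : Kˣ) : K) ^ ((p.2 : ℕ)) + α p.1.1))
        = Set.range fun p : Fin ((q ^ (m - t) - 1) / r + 1) => (phiPoly G V).eval (α p) := by
      apply Set.Subset.antisymm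
      · rintro _ ⟨⟨⟨i, hi⟩, k⟩, rfl⟩
        have hy : (((θ : Kˣ) : K) ^ (k : ℕ) + α i) ∈
            (⋃ p, ⋃ g : G, coset (V : Set K) (α p * ((g : Kˣ) : K))) := by
          rw [hcover]; trivial
        simp only [Set.mem_iUnion] at hy
        obtain ⟨p, g, v, hv, hyv⟩ := hy
        refine ⟨p, ?_⟩
        simp only
        rw [hyv, phi_eval_add_mem G V _ _ hv, phi_eval_mul_g G V hGsub]
      · rintro _ ⟨p, rfl⟩
        simp only
        by_cases hp : p = 0
        · subst hp
          have hL1 : 1 ≤ (q ^ (m - t) - 1) / r := by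
            have hmt : 1 ≤ m - t := by omega
            have hq' : q ≤ q ^ (m - t) := Nat.le_self_pow (by omega) q
            have hrq : r ≤ q ^ (m - t) - 1 := by
              have := Nat.le_of_dvd (by omega) hr
              omega
            exact (Nat.one_le_div_iff (by omega)).2 hrq
          have hi1 : (⟨1, by omega⟩ : Fin ((q ^ (m - t) - 1) / r + 1)) ≠ 0 := by
            intro h0
            simpa [Fin.ext_iff] using h0
          obtain ⟨k, hk, hkθ⟩ := exists_pow (-(α ⟨1, by omega⟩)) (neg_ne_zero.2 (hαne _ hi1))
          refine ⟨⟨⟨⟨1, by omega⟩, hi1⟩, ⟨k, hk⟩⟩, ?_⟩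
          simp only
          rw [hkθ, neg_add_cancel, hα0]
        · obtain ⟨g, hg⟩ := Fintype.exists_ne_of_one_lt_card (by rw [hGcard]; omega) (1 : G)
          have hxne : α p * ((g : Kˣ) : K) - α p ≠ 0 := by
            intro h0
            apply hg
            have h1 : α p * ((g : Kˣ) : K) = α p * 1 := by
              rw [mul_one]
              linear_combination h0
            have h2 : ((g : Kˣ) : K) = 1 := mul_left_cancel₀ (hαne p hp) h1
            have h3 : (g : Kˣ) = 1 := Units.ext h2
            exact Subtype.ext h3
          obtain ⟨k, hk, hkθ⟩ := exists_pow _ hxne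
          refine ⟨⟨⟨p, hp⟩, ⟨k, hk⟩⟩, ?_⟩
          simp only
          rw [hkθ, sub_add_cancel, phi_eval_mul_g G V hGsub]
    rw [hrange]
    have hinj2 : Function.Injective
        fun p : Fin ((q ^ (m - t) - 1) / r + 1) => (phiPoly G V).eval (α p) := by
      intro a b hab
      by_contra hab'
      exact values_ne G V hGsub α hα0 hne hinj hab' hab
    rw [← Set.image_univ, Set.ncard_image_of_injective _ hinj2, Set.ncard_univ,
      Nat.card_eq_fintype_card, Fintype.card_fin]
  · -- part 3 : Hamming correlation bound
    intro i j hi hj τ hτ hcases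
    have hc0 : (((θ : Kˣ) : K) ^ τ) ≠ 0 := pow_ne_zero _ (Units.ne_zero θ)
    set ψ : K[X] := (phiPoly G V).comp (X + C (α i))
      - (phiPoly G V).comp (C (((θ : Kˣ) : K) ^ τ) * X + C (α j)) with hψ
    have hψeval : ∀ x : K,
        ψ.eval x = (phiPoly G V).eval (x + α i)
          - (phiPoly G V).eval (((θ : Kˣ) : K) ^ τ * x + α j) := by
      intro x
      simp [hψ, eval_comp]
    have hψne : ψ ≠ 0 := by
      intro h0
      refine no_identity G V hGsub α hα0 hne hinj hcover i j hi hj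
        (((θ : Kˣ) : K) ^ τ) ?_ (fun x => ?_)
      · rcases hcases with hij | hτ1
        · exact Or.inr hij
        · left
          intro hc1
          have hu1 : θ ^ τ = 1 := Units.ext (by
            rw [Units.val_pow_eq_pow_val, hc1, Units.val_one])
          have hdvd := orderOf_dvd_of_pow_eq_one hu1
          rw [hord] at hdvd
          have := Nat.le_of_dvd (by omega) hdvd
          omega
      · have h1 : ψ.eval x = 0 := by rw [h0, eval_zero]
        rw [hψeval] at h1
        exact sub_eq_zero.mp h1
    have hψdeg : ψ.natDegree ≤ r * q ^ t := by
      have hD : (phiPoly G V).natDegree = r * q ^ t := by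
        rw [phiPoly_natDegree, hGcard, hVcard]
      refine le_trans (natDegree_sub_le _ _) (max_le ?_ ?_)
      · refine le_trans natDegree_comp_le ?_
        rw [natDegree_X_add_C, mul_one, hD]
      · refine le_trans natDegree_comp_le ?_
        have h1 : (C (((θ : Kˣ) : K) ^ τ) * X + C (α j)).natDegree ≤ 1 := by
          refine le_trans (natDegree_add_le _ _) (max_le ?_ ?_)
          · exact le_trans (natDegree_C_mul_le _ _) (by rw [natDegree_X])
          · rw [natDegree_C]; omega
        calc (phiPoly G V).natDegree * (C (((θ : Kˣ) : K) ^ τ) * X + C (α j)).natDegree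
            ≤ (phiPoly G V).natDegree * 1 := Nat.mul_le_mul_left _ h1
          _ = r * q ^ t := by rw [mul_one, hD]
    have hroot : ∀ k ∈ (Finset.range (q ^ m - 1)).filter (fun k =>
        (phiPoly G V).eval (((θ : Kˣ) : K) ^ k + α i) =
        (phiPoly G V).eval (((θ : Kˣ) : K) ^ ((k + τ) % (q ^ m - 1)) + α j)),
        ψ.eval (((θ : Kˣ) : K) ^ k) = 0 := by
      intro k hk
      rw [Finset.mem_filter, Finset.mem_range] at hk
      obtain ⟨hkN, hkeq⟩ := hk
      rw [hψeval, sub_eq_zero, hkeq]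
      congr 1
      have e1 : ((θ : Kˣ) : K) ^ ((k + τ) % (q ^ m - 1)) = ((θ : Kˣ) : K) ^ (k + τ) :=
        (pow_eq_pow_mod _ hθN).symm
      rw [e1, pow_add]
      ring
    have hinjOn : Set.InjOn (fun k : ℕ => ((θ : Kˣ) : K) ^ k)
        ((Finset.range (q ^ m - 1)).filter (fun k =>
          (phiPoly G V).eval (((θ : Kˣ) : K) ^ k + α i) =
          (phiPoly G V).eval (((θ : Kˣ) : K) ^ ((k + τ) % (q ^ m - 1)) + α j))) := by
      intro k1 hk1 k2 hk2 hkk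
      simp only at hkk
      have hk1N : k1 < q ^ m - 1 := Finset.mem_range.1 (Finset.mem_filter.1 hk1).1
      have hk2N : k2 < q ^ m - 1 := Finset.mem_range.1 (Finset.mem_filter.1 hk2).1
      have hu : θ ^ k1 = θ ^ k2 := Units.ext (by
        rw [Units.val_pow_eq_pow_val, Units.val_pow_eq_pow_val]; exact hkk)
      exact pow_injOn_Iio_orderOf (by rw [hord]; exact hk1N) (by rw [hord]; exact hk2N) hu
    calc ((Finset.range (q ^ m - 1)).filter (fun k =>
          (phiPoly G V).eval (((θ : Kˣ) : K) ^ k + α i) =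
          (phiPoly G V).eval (((θ : Kˣ) : K) ^ ((k + τ) % (q ^ m - 1)) + α j))).card
        = (((Finset.range (q ^ m - 1)).filter (fun k =>
          (phiPoly G V).eval (((θ : Kˣ) : K) ^ k + α i) =
          (phiPoly G V).eval (((θ : Kˣ) : K) ^ ((k + τ) % (q ^ m - 1)) + α j))).image
            (fun k : ℕ => ((θ : Kˣ) : K) ^ k)).card :=
          (Finset.card_image_of_injOn hinjOn).symm
      _ ≤ ψ.natDegree := by
          refine card_le_natDegree_of_roots hψne _ ?_
          intro x hx
          obtain ⟨k, hk, rfl⟩ := Finset.mem_image.mp hx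
          exact hroot k hk
      _ ≤ r * q ^ t := hψdeg
end

section
/- Let r = 1 (so G = {1}) and t ≤ m - 1, and let V be an F_q-subspace of F_{q^m} of dimension t with coset representatives α_1 = 0, α_2, ..., α_{q^{m-t}} (so the α_i + V partition F_{q^m}). With φ(x) = ∏_{β ∈ V}(x + β) and θ a generator of F_{q^m}^*, define s_i = (φ(θ^0 + α_i), ..., φ(θ^{q^m-2} + α_i)) for 1 ≤ i ≤ q^{m-t}. Then {s_1,...,s_{q^{m-t}}} is a set of q^{m-t} sequences of length q^m - 1 over an alphabet of size q^{m-t}, with maximum Hamming correlation at most q^t. -/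
open Polynomial Finset
open scoped Classical

section Aux
variable {Fq K : Type*} [Field Fq] [Fintype Fq] [Field K] [Fintype K] [Algebra Fq K]
variable (V : Submodule Fq K)

lemma psi_eval (a : K) : (∏ β : V, (X + C (β : K))).eval a = ∏ β : V, (a + (β : K)) := by
  simp [eval_prod]

lemma psi_eval_congr {a b : K} (h : a - b ∈ V) :
    (∏ β : V, (X + C (β : K))).eval a = (∏ β : V, (X + C (β : K))).eval b := by
  rw [psi_eval, psi_eval]
  refine Fintype.prod_equiv (Equiv.addRight (⟨a - b, h⟩ : V)) _ _ fun β => ?_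
  simp only [Equiv.coe_addRight, Submodule.coe_add]
  ring

lemma psi_natDegree : (∏ β : V, (X + C (β : K))).natDegree = Fintype.card V := by
  rw [natDegree_prod_of_monic _ _ (fun β _ => monic_X_add_C _)]
  simp

lemma psi_fiber_card_le (y : K) :
    (Finset.univ.filter fun x : K => (∏ β : V, (X + C (β : K))).eval x = y).card
      ≤ Fintype.card V := by
  classical
  have hdeg : ((∏ β : V, (X + C (β : K))) - C y).natDegree = Fintype.card V := by
    rw [natDegree_sub_C, psi_natDegree]
  have hne : ((∏ β : V, (X + C (β : K))) - C y) ≠ 0 := by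
    intro h
    have h2 := hdeg
    rw [h, natDegree_zero] at h2
    exact Fintype.card_pos.ne' h2.symm
  calc (Finset.univ.filter fun x : K => (∏ β : V, (X + C (β : K))).eval x = y).card
      ≤ (((∏ β : V, (X + C (β : K))) - C y).roots.toFinset).card := by
        apply Finset.card_le_card
        intro x hx
        rw [Finset.mem_filter] at hx
        rw [Multiset.mem_toFinset, mem_roots hne]
        simp [IsRoot, hx.2]
    _ ≤ (((∏ β : V, (X + C (β : K))) - C y).roots).card := Multiset.toFinset_card_le _
    _ ≤ _ := by rw [← hdeg]; exact card_roots' _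

lemma psi_eval_eq_iff (a b : K) :
    (∏ β : V, (X + C (β : K))).eval a = (∏ β : V, (X + C (β : K))).eval b ↔ a - b ∈ V := by
  constructor
  · intro h
    by_contra hab
    classical
    set A : Finset K := Finset.univ.image (fun v : V => a + (v : K)) with hA
    set B : Finset K := Finset.univ.image (fun v : V => b + (v : K)) with hB
    have hinj : ∀ c : K, Function.Injective (fun v : V => c + (v : K)) := by
      intro c x y hxy
      have : (x : K) = y := add_left_cancel hxy
      exact Subtype.ext this
    have hAcard : A.card = Fintype.card V := by
      rw [hA, Finset.card_image_of_injective _ (hinj a), Finset.card_univ]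
    have hBcard : B.card = Fintype.card V := by
      rw [hB, Finset.card_image_of_injective _ (hinj b), Finset.card_univ]
    have hdisj : Disjoint A B := by
      rw [Finset.disjoint_left]
      rintro x hxA hxB
      rw [hA, Finset.mem_image] at hxA
      rw [hB, Finset.mem_image] at hxB
      obtain ⟨v, -, hv⟩ := hxA
      obtain ⟨w, -, hw⟩ := hxB
      apply hab
      have hx : a - b = (w : K) - (v : K) := by linear_combination hv - hw
      rw [hx]
      exact V.sub_mem w.2 v.2
    have hsub : A ∪ B ⊆ Finset.univ.filter
        (fun x : K => (∏ β : V, (X + C (β : K))).eval x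
          = (∏ β : V, (X + C (β : K))).eval a) := by
      intro x hx
      rw [Finset.mem_union] at hx
      rw [Finset.mem_filter]
      refine ⟨Finset.mem_univ _, ?_⟩
      rcases hx with hx | hx
      · rw [hA, Finset.mem_image] at hx
        obtain ⟨v, -, rfl⟩ := hx
        exact psi_eval_congr V (by simpa using v.2)
      · rw [hB, Finset.mem_image] at hx
        obtain ⟨v, -, rfl⟩ := hx
        exact (psi_eval_congr V (by simpa using v.2)).trans h.symm
    have hcards := Finset.card_le_card hsub
    rw [Finset.card_union_of_disjoint hdisj, hAcard, hBcard] at hcards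
    have hle := le_trans hcards (psi_fiber_card_le V _)
    have hVpos : 0 < Fintype.card V := Fintype.card_pos
    omega
  · exact psi_eval_congr V

lemma coset_eq_of_sub_mem {a b : K} (h : a - b ∈ V) :
    coset (V : Set K) a = coset (V : Set K) b := by
  ext x
  constructor
  · rintro ⟨v, hv, rfl⟩
    exact ⟨(a - b) + v, V.add_mem h hv, by ring⟩
  · rintro ⟨v, hv, rfl⟩
    exact ⟨(b - a) + v, V.add_mem (by simpa using V.neg_mem h) hv, by ring⟩

end Aux

/-- the `r = 1` (`G = {1}`) case: with `φ(x) = ∏_{β ∈ V}(x+β)` and coset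
representatives `α_1 = 0, …, α_{q^{m-t}}`, one gets `q^{m-t}` pairwise distinct
sequences of length `q^m - 1` over an alphabet of size `q^{m-t}`, with maximum
Hamming correlation at most `q^t`. -/
theorem stmt8 (q m t : ℕ) (hq : IsPrimePow q) (hm : 1 ≤ m) (ht : t ≤ m - 1)
    (Fq K : Type*) [Field Fq] [Fintype Fq] [Field K] [Fintype K] [Algebra Fq K]
    (hcq : Fintype.card Fq = q) (hcK : Fintype.card K = q ^ m)
    (V : Submodule Fq K) (hV : Module.finrank Fq V = t)
    (θ : Kˣ) (hθ : ∀ x : Kˣ, x ∈ Subgroup.zpowers θ)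
    (hpos : 0 < q ^ (m - t))
    (α : Fin (q ^ (m - t)) → K) (hα0 : α ⟨0, hpos⟩ = 0)
    (hdist : ∀ i j : Fin (q ^ (m - t)), i ≠ j →
      coset (V : Set K) (α i) ≠ coset (V : Set K) (α j))
    (hcover : (⋃ i, coset (V : Set K) (α i)) = Set.univ) :
    (∀ i j : Fin (q ^ (m - t)), i ≠ j →
      (fun k : Fin (q ^ m - 1) => (∏ β : V, (X + C (β : K))).eval (((θ : Kˣ) : K) ^ (k : ℕ) + α i)) ≠
      (fun k : Fin (q ^ m - 1) => (∏ β : V, (X + C (β : K))).eval (((θ : Kˣ) : K) ^ (k : ℕ) + α j))) ∧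
    (Set.range (fun p : Fin (q ^ (m - t)) × Fin (q ^ m - 1) =>
      (∏ β : V, (X + C (β : K))).eval (((θ : Kˣ) : K) ^ ((p.2 : ℕ)) + α p.1))).ncard
        = q ^ (m - t) ∧
    (∀ i j : Fin (q ^ (m - t)), ∀ τ : ℕ, τ < q ^ m - 1 → (i ≠ j ∨ 1 ≤ τ) →
      ((Finset.range (q ^ m - 1)).filter (fun k =>
        (∏ β : V, (X + C (β : K))).eval (((θ : Kˣ) : K) ^ k + α i) =
        (∏ β : V, (X + C (β : K))).eval (((θ : Kˣ) : K) ^ ((k + τ) % (q ^ m - 1)) + α j))).card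
          ≤ q ^ t) := by
  classical
  have hq2 : 2 ≤ q := hq.two_le
  have hqm2 : 2 ≤ q ^ m := le_trans hq2 (Nat.le_self_pow (by omega) q)
  have hNpos : 0 < q ^ m - 1 := by omega
  have hmt : 1 ≤ m - t := by omega
  have hVcard : Fintype.card V = q ^ t := by
    rw [Module.card_eq_pow_finrank (K := Fq), hcq, hV]
  -- order of θ
  have hord : orderOf θ = q ^ m - 1 := by
    rw [orderOf_eq_card_of_forall_mem_zpowers hθ, Nat.card_eq_fintype_card,
      Fintype.card_units, hcK]
  have hpowinj : ∀ k k' : ℕ, k < q ^ m - 1 → k' < q ^ m - 1 →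
      ((θ : Kˣ) : K) ^ k = ((θ : Kˣ) : K) ^ k' → k = k' := by
    intro k k' hk hk' h
    have hu : θ ^ k = θ ^ k' := by
      ext; push_cast; exact h
    exact pow_injOn_Iio_orderOf (by rw [hord]; exact hk) (by rw [hord]; exact hk') hu
  have hpowsur : ∀ x : K, x ≠ 0 → ∃ k < q ^ m - 1, ((θ : Kˣ) : K) ^ k = x := by
    intro x hx
    obtain ⟨n, hn⟩ := Subgroup.mem_zpowers_iff.mp (hθ (Units.mk0 x hx))
    have hop : (0:ℤ) < (orderOf θ : ℤ) := by
      rw [hord]; exact_mod_cast hNpos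
    have h0 : (0:ℤ) ≤ n % (orderOf θ : ℤ) := Int.emod_nonneg n hop.ne'
    have hlt : n % (orderOf θ : ℤ) < (orderOf θ : ℤ) := Int.emod_lt_of_pos n hop
    refine ⟨(n % (orderOf θ : ℤ)).toNat, ?_, ?_⟩
    · rw [← hord]; omega
    · have h3 : θ ^ ((n % (orderOf θ : ℤ)).toNat) = Units.mk0 x hx := by
        rw [← zpow_natCast, Int.toNat_of_nonneg h0, zpow_mod_orderOf]; exact hn
      have h4 := congrArg (Units.val) h3
      push_cast at h4
      simpa using h4
  have hsubne : ∀ i j : Fin (q ^ (m - t)), i ≠ j → α i - α j ∉ V := by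
    intro i j hij h
    exact hdist i j hij (coset_eq_of_sub_mem V h)
  have hαinj : Function.Injective α := by
    intro i j h
    by_contra hij
    exact hsubne i j hij (by rw [h, sub_self]; exact V.zero_mem)
  refine ⟨?_, ?_, ?_⟩
  · -- pairwise distinct sequences
    intro i j hij h
    have h0 := congrFun h ⟨0, hNpos⟩
    simp only [pow_zero] at h0
    have := (psi_eval_eq_iff V _ _).mp h0
    have heq : (1 + α i) - (1 + α j) = α i - α j := by ring
    rw [heq] at this
    exact hsubne i j hij this
  · -- alphabet size
    have hrange : (Set.range (fun p : Fin (q ^ (m - t)) × Fin (q ^ m - 1) =>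
        (∏ β : V, (X + C (β : K))).eval (((θ : Kˣ) : K) ^ ((p.2 : ℕ)) + α p.1)))
        = Set.range (fun i : Fin (q ^ (m - t)) => (∏ β : V, (X + C (β : K))).eval (α i)) := by
      apply Set.Subset.antisymm
      · rintro y ⟨⟨i, k⟩, rfl⟩
        have hx : ((θ : Kˣ) : K) ^ (k : ℕ) + α i ∈ (Set.univ : Set K) := Set.mem_univ _
        rw [← hcover] at hx
        obtain ⟨s, ⟨i', rfl⟩, hmem⟩ := hx
        obtain ⟨v, hv, hxv⟩ := hmem
        refine ⟨i', ?_⟩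
        exact (psi_eval_congr V (by rw [hxv]; simpa using V.neg_mem hv)).symm
      · rintro y ⟨i, rfl⟩
        have hcard2 : 2 ≤ q ^ (m - t) := le_trans hq2 (Nat.le_self_pow (by omega) q)
        have hnt : Nontrivial (Fin (q ^ (m - t))) := Fin.nontrivial_iff_two_le.mpr hcard2
        obtain ⟨i', hi'⟩ := exists_ne i
        have hne : α i - α i' ≠ 0 := by
          intro h
          exact hsubne i i' (Ne.symm hi') (by rw [h]; exact V.zero_mem)
        obtain ⟨k, hk, hθk⟩ := hpowsur _ hne
        refine ⟨⟨i', ⟨k, hk⟩⟩, ?_⟩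
        have hxv : ((θ : Kˣ) : K) ^ k + α i' = α i := by rw [hθk]; ring
        simp only [hxv]
    have geval : Function.Injective
        (fun i : Fin (q ^ (m - t)) => (∏ β : V, (X + C (β : K))).eval (α i)) := by
      intro i j h
      by_contra hij
      exact hsubne i j hij ((psi_eval_eq_iff V _ _).mp h)
    rw [hrange, ← Set.image_univ, Set.ncard_image_of_injective _ geval,
      Set.ncard_univ, Nat.card_eq_fintype_card, Fintype.card_fin]
  · -- correlation bound
    intro i j τ hτ hcase
    set N := q ^ m - 1 with hNdef
    rcases Nat.eq_zero_or_pos τ with rfl | hτ1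
    · -- τ = 0, i ≠ j
      have hij : i ≠ j := hcase.resolve_right (by omega)
      have : ((Finset.range N).filter (fun k =>
          (∏ β : V, (X + C (β : K))).eval (((θ : Kˣ) : K) ^ k + α i) =
          (∏ β : V, (X + C (β : K))).eval (((θ : Kˣ) : K) ^ ((k + 0) % N) + α j))) = ∅ := by
        rw [Finset.filter_eq_empty_iff]
        intro k hk
        rw [Finset.mem_range] at hk
        rw [Nat.add_zero, Nat.mod_eq_of_lt hk]
        intro h
        have := (psi_eval_eq_iff V _ _).mp h
        have heq : (((θ : Kˣ) : K) ^ k + α i) - (((θ : Kˣ) : K) ^ k + α j) = α i - α j := by ring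
        rw [heq] at this
        exact hsubne i j hij this
      rw [this]
      simp
    · -- τ ≥ 1
      have hu : (1 : K) - ((θ : Kˣ) : K) ^ τ ≠ 0 := by
        intro h
        have hτ1' : ((θ : Kˣ) : K) ^ τ = 1 := by linear_combination -h
        have : θ ^ τ = 1 := by ext; push_cast; exact hτ1'
        have hdvd := orderOf_dvd_of_pow_eq_one this
        rw [hord] at hdvd
        have := Nat.le_of_dvd hτ1 hdvd
        omega
      set u : K := 1 - ((θ : Kˣ) : K) ^ τ with hudef
      set Vfin : Finset K := Finset.univ.image (fun v : V => (v : K)) with hVfin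
      have hVfincard : Vfin.card = q ^ t := by
        rw [hVfin, Finset.card_image_of_injective _ Subtype.coe_injective,
          Finset.card_univ, hVcard]
      rw [← hVfincard]
      apply Finset.card_le_card_of_injOn (fun k => ((θ : Kˣ) : K) ^ k * u + (α i - α j))
      · intro k hk
        rw [Finset.mem_coe, Finset.mem_filter, Finset.mem_range] at hk
        obtain ⟨hkN, hkeq⟩ := hk
        have hmod : ((θ : Kˣ) : K) ^ ((k + τ) % N) = ((θ : Kˣ) : K) ^ (k + τ) := by
          have : θ ^ ((k + τ) % N) = θ ^ (k + τ) := by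
            rw [← hord]; exact pow_mod_orderOf θ (k + τ)
          calc ((θ : Kˣ) : K) ^ ((k + τ) % N) = ((θ ^ ((k + τ) % N) : Kˣ) : K) := by push_cast; ring
            _ = ((θ ^ (k + τ) : Kˣ) : K) := by rw [this]
            _ = ((θ : Kˣ) : K) ^ (k + τ) := by push_cast; ring
        rw [hmod] at hkeq
        have hmem := (psi_eval_eq_iff V _ _).mp hkeq
        have heq : (((θ : Kˣ) : K) ^ k + α i) - (((θ : Kˣ) : K) ^ (k + τ) + α j)
            = ((θ : Kˣ) : K) ^ k * u + (α i - α j) := by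
          rw [hudef, pow_add]; ring
        rw [heq] at hmem
        rw [hVfin, Finset.mem_coe, Finset.mem_image]
        exact ⟨⟨_, hmem⟩, Finset.mem_univ _, rfl⟩
      · intro k hk k' hk' h
        simp only [Finset.coe_filter, Set.mem_setOf_eq] at hk hk'
        have hkN : k < N := Finset.mem_range.mp hk.1
        have hk'N : k' < N := Finset.mem_range.mp hk'.1
        have : ((θ : Kˣ) : K) ^ k * u = ((θ : Kˣ) : K) ^ k' * u := by linear_combination h
        exact hpowinj k k' hkN hk'N (mul_right_cancel₀ hu this)
end
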